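/- arXiv:0908.2228 — 2 statements merged into one kernel-verified Lean document; each statement's English description precedes it below -/
import Mathlib

section
/- Let (X_n)_{n∈ω} be an increasing sequence of topological vector spaces over ℝ (or ℂ) in which each X_n is a linear subspace of X_{n+1} carrying the subspace topology, and each X_n carries the uniformity of its additive topological group (so that (X_n) is a tower of uniform spaces). Then the uniform direct limit u-lim X_n, with the linear operations of X = ⋃_n X_n and the topology induced by the direct limit uniformity, is a topological vector space; consequently this topology is the strongest topology on X turning X into a topological vector space and making all inclusions X_n → X continuous, i.e., the identity map u-lim X_n → l-lim X_n is a homeomorphism. -/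
open Set Filter Topology

open Pointwise

universe u v


section Aux

variable {𝕜 : Type v} [RCLike 𝕜] {E : Type u} [AddCommGroup E] [Module 𝕜 E]

/-- Partial "sum sets": `psum S W n = W 0 + W 1 + ⋯ + W n` viewed inside `E`. -/
def psum (S : ℕ → Submodule 𝕜 E) (W : (n : ℕ) → Set (S n)) : ℕ → Set E
  | 0 => Subtype.val '' W 0
  | n + 1 => psum S W n + Subtype.val '' W (n + 1)

/-- `Wset S W = ⋃ n, (W 0 + ⋯ + W n)`. -/
def Wset (S : ℕ → Submodule 𝕜 E) (W : (n : ℕ) → Set (S n)) : Set E :=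
  ⋃ n, psum S W n

variable {S : ℕ → Submodule 𝕜 E}

theorem zero_mem_psum {W : (n : ℕ) → Set (S n)} (h : ∀ n, (0 : S n) ∈ W n) :
    ∀ n, (0 : E) ∈ psum S W n
  | 0 => ⟨0, h 0, rfl⟩
  | n + 1 => by
    have : (0 : E) = 0 + 0 := by simp
    rw [this]
    exact Set.add_mem_add (zero_mem_psum h n) ⟨0, h (n + 1), rfl⟩

theorem val_mem_psum {W : (n : ℕ) → Set (S n)} (h : ∀ n, (0 : S n) ∈ W n) :
    ∀ n, ∀ a ∈ W n, (a : E) ∈ psum S W n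
  | 0, a, ha => ⟨a, ha, rfl⟩
  | n + 1, a, ha => by
    have : (a : E) = 0 + (a : E) := by simp
    rw [this]
    exact Set.add_mem_add (zero_mem_psum h n) ⟨a, ha, rfl⟩

theorem psum_mono_left {W W' : (n : ℕ) → Set (S n)} (h : ∀ n, W n ⊆ W' n) :
    ∀ n, psum S W n ⊆ psum S W' n
  | 0 => Set.image_mono (h 0)
  | n + 1 => Set.add_subset_add (psum_mono_left h n) (Set.image_mono (h (n + 1)))

theorem psum_mono_index {W : (n : ℕ) → Set (S n)} (h : ∀ n, (0 : S n) ∈ W n)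
    {n m : ℕ} (hnm : n ≤ m) : psum S W n ⊆ psum S W m := by
  induction m, hnm using Nat.le_induction with
  | base => exact le_rfl
  | succ m hm ih =>
    refine ih.trans fun x hx => ?_
    have : x = x + 0 := by simp
    rw [this]
    exact Set.add_mem_add hx ⟨0, h (m + 1), rfl⟩

theorem val_mem_Wset {W : (n : ℕ) → Set (S n)} (h : ∀ n, (0 : S n) ∈ W n)
    {n : ℕ} {a : S n} (ha : a ∈ W n) : (a : E) ∈ Wset S W :=
  mem_iUnion.mpr ⟨n, val_mem_psum h n a ha⟩

theorem add_mem_psum {W W' : (n : ℕ) → Set (S n)}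
    (h : ∀ i, ∀ a ∈ W i, ∀ b ∈ W i, a + b ∈ W' i) :
    ∀ n, ∀ x ∈ psum S W n, ∀ y ∈ psum S W n, x + y ∈ psum S W' n := by
  intro n
  induction n with
  | zero =>
    rintro _ ⟨a, ha, rfl⟩ _ ⟨b, hb, rfl⟩
    exact ⟨a + b, h 0 a ha b hb, by push_cast; try abel⟩
  | succ n ih =>
    rintro _ ⟨x1, hx1, _, ⟨a, ha, rfl⟩, rfl⟩ _ ⟨y1, hy1, _, ⟨b, hb, rfl⟩, rfl⟩
    have : x1 + (a : E) + (y1 + (b : E)) = (x1 + y1) + ((a : E) + (b : E)) := by abel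
    rw [this]
    exact Set.add_mem_add (ih x1 hx1 y1 hy1) ⟨a + b, h (n + 1) a ha b hb, by push_cast; try abel⟩

theorem add_mem_Wset {W W' : (n : ℕ) → Set (S n)} (h0 : ∀ n, (0 : S n) ∈ W n)
    (h : ∀ i, ∀ a ∈ W i, ∀ b ∈ W i, a + b ∈ W' i)
    {x y : E} (hx : x ∈ Wset S W) (hy : y ∈ Wset S W) : x + y ∈ Wset S W' := by
  rcases mem_iUnion.mp hx with ⟨n, hn⟩
  rcases mem_iUnion.mp hy with ⟨m, hm⟩
  exact mem_iUnion.mpr ⟨max n m,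
    add_mem_psum h (max n m) x (psum_mono_index h0 (le_max_left n m) hn) y
      (psum_mono_index h0 (le_max_right n m) hm)⟩

theorem map_mem_psum {W W' : (n : ℕ) → Set (S n)} (f : E → E)
    (hf : ∀ x y : E, f (x + y) = f x + f y)
    (h : ∀ i, ∀ a ∈ W i, ∃ b ∈ W' i, f (a : E) = (b : E)) :
    ∀ n, ∀ x ∈ psum S W n, f x ∈ psum S W' n := by
  intro n
  induction n with
  | zero =>
    rintro _ ⟨a, ha, rfl⟩
    rcases h 0 a ha with ⟨b, hb, hab⟩
    exact ⟨b, hb, hab.symm⟩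
  | succ n ih =>
    rintro _ ⟨x1, hx1, _, ⟨a, ha, rfl⟩, rfl⟩
    rw [hf]
    rcases h (n + 1) a ha with ⟨b, hb, hab⟩
    exact Set.add_mem_add (ih x1 hx1) ⟨b, hb, hab.symm⟩

theorem map_mem_Wset {W W' : (n : ℕ) → Set (S n)} (f : E → E)
    (hf : ∀ x y : E, f (x + y) = f x + f y)
    (h : ∀ i, ∀ a ∈ W i, ∃ b ∈ W' i, f (a : E) = (b : E))
    {x : E} (hx : x ∈ Wset S W) : f x ∈ Wset S W' := by
  rcases mem_iUnion.mp hx with ⟨n, hn⟩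
  exact mem_iUnion.mpr ⟨n, map_mem_psum f hf h n x hn⟩

theorem mem_psum_exists {W : (n : ℕ) → Set (S n)} :
    ∀ {n : ℕ} {x : E}, x ∈ psum S W n → ∃ g : (j : ℕ) → S j,
      (∀ j ≤ n, g j ∈ W j) ∧ x = ∑ j ∈ Finset.range (n + 1), ((g j : E)) := by
  intro n
  induction n with
  | zero =>
    rintro _ ⟨a, ha, rfl⟩
    refine ⟨fun j => Nat.casesOn j a fun _ => 0, ?_, ?_⟩
    · intro j hj
      interval_cases j
      exact ha
    · simp
  | succ n ih =>
    rintro _ ⟨x1, hx1, _, ⟨a, ha, rfl⟩, rfl⟩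
    rcases ih hx1 with ⟨g, hg, rfl⟩
    refine ⟨Function.update g (n + 1) a, ?_, ?_⟩
    · intro j hj
      rcases eq_or_lt_of_le hj with rfl | hj'
      · rw [Function.update_self]; exact ha
      · rw [Function.update_of_ne (by omega)]
        exact hg j (by omega)
    · conv_rhs => rw [Finset.sum_range_succ]
      rw [Function.update_self]
      congr 1
      refine Finset.sum_congr rfl fun j hj => ?_
      rw [Function.update_of_ne (by have := Finset.mem_range.mp hj; omega)]

end Aux
section Chain

theorem chain_comp {α : Type u} {D : ℕ → Set (α × α)}
    (href : ∀ k (x : α), (x, x) ∈ D k)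
    (hcomp : ∀ k, ∀ x y z : α, (x, y) ∈ D (k + 1) → (y, z) ∈ D (k + 1) → (x, z) ∈ D k) :
    ∀ (n k : ℕ) (z : ℕ → α), (∀ j ≤ n, (z j, z (j + 1)) ∈ D (k + j + 1)) →
      (z 0, z (n + 1)) ∈ D k := by
  intro n
  induction n with
  | zero =>
    intro k z h
    exact hcomp k _ _ _ (h 0 le_rfl) (href (k + 1) _)
  | succ n ih =>
    intro k z h
    have h1 : (z 0, z 1) ∈ D (k + 1) := h 0 (by omega)
    have h2 : (z 1, z (n + 2)) ∈ D (k + 1) := by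
      refine ih (k + 1) (fun j => z (j + 1)) fun j hj => ?_
      have := h (j + 1) (by omega)
      simpa [show k + (j + 1) + 1 = k + 1 + j + 1 by omega] using this
    exact hcomp k _ _ _ h1 h2

end Chain

section Incl

variable {𝕜 : Type v} [RCLike 𝕜] {E : Type u} [AddCommGroup E] [Module 𝕜 E]
variable {S : ℕ → Submodule 𝕜 E}

theorem incl_cont (mono : Monotone S) (t : (n : ℕ) → TopologicalSpace (S n))
    (hcompat_t : ∀ n, t n =
      TopologicalSpace.induced (⇑(Submodule.inclusion (mono (Nat.le_succ n)))) (t (n + 1)))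
    {n m : ℕ} (h : n ≤ m) :
    @Continuous _ _ (t n) (t m) (⇑(Submodule.inclusion (mono h))) := by
  induction m, h using Nat.le_induction with
  | base =>
    have : ⇑(Submodule.inclusion (mono (le_refl n))) = id :=
      funext fun x => Subtype.ext rfl
    rw [this]
    exact continuous_id
  | succ m hm ih =>
    have hstep : @Continuous _ _ (t m) (t (m + 1))
        (⇑(Submodule.inclusion (mono (Nat.le_succ m)))) :=
      continuous_iff_le_induced.mpr (le_of_eq (hcompat_t m))
    have : ⇑(Submodule.inclusion (mono (hm.trans (Nat.le_succ m)))) =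
        (⇑(Submodule.inclusion (mono (Nat.le_succ m)))) ∘
          (⇑(Submodule.inclusion (mono hm))) :=
      funext fun x => Subtype.ext rfl
    rw [this]
    exact hstep.comp ih

end Incl
section Basis

variable {𝕜 : Type v} [RCLike 𝕜] {E : Type u} [AddCommGroup E] [Module 𝕜 E]

/-- The filter basis of the linear direct limit topology: the sets
`⋃ n, (W 0 + ⋯ + W n)` where `W n` runs over neighborhoods of `0` in `S n`. -/
def limBasis (S : ℕ → Submodule 𝕜 E) (hunion : ∀ x : E, ∃ n, x ∈ S n)
    (t : (n : ℕ) → TopologicalSpace (S n))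
    (htag : ∀ n, @IsTopologicalAddGroup (S n) (t n) _)
    (hsmul : ∀ n, @ContinuousSMul 𝕜 (S n) _ _ (t n)) :
    ModuleFilterBasis 𝕜 E where
  toAddGroupFilterBasis := addGroupFilterBasisOfComm
    ((fun W => Wset S W) '' {W | ∀ n, W n ∈ @nhds _ (t n) (0 : S n)})
    ⟨Wset S fun _ => univ, ⟨fun _ => univ, fun n => by letI := t n; exact univ_mem, rfl⟩⟩
    (by
      rintro _ _ ⟨W, hW, rfl⟩ ⟨W', hW', rfl⟩
      refine ⟨Wset S fun n => W n ∩ W' n, ⟨fun n => W n ∩ W' n,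
        fun n => by letI := t n; exact inter_mem (hW n) (hW' n), rfl⟩, ?_⟩
      exact subset_inter
        (iUnion_subset fun n => (psum_mono_left (fun i => inter_subset_left) n).trans
          (subset_iUnion _ n))
        (iUnion_subset fun n => (psum_mono_left (fun i => inter_subset_right) n).trans
          (subset_iUnion _ n)))
    (by
      rintro _ ⟨W, hW, rfl⟩
      exact mem_iUnion.mpr ⟨0, zero_mem_psum (fun n => by
        letI := t n; exact mem_of_mem_nhds (hW n)) 0⟩)
    (by
      rintro _ ⟨W, hW, rfl⟩
      have key : ∀ n, ∃ V ∈ @nhds _ (t n) (0 : S n), ∀ v ∈ V, ∀ w ∈ V, v + w ∈ W n := by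
        intro n
        letI := t n; haveI := htag n
        exact exists_nhds_zero_half (hW n)
      choose V hV hVW using key
      refine ⟨Wset S V, ⟨V, hV, rfl⟩, ?_⟩
      rintro _ ⟨x, hx, y, hy, rfl⟩
      exact add_mem_Wset (fun n => by letI := t n; exact mem_of_mem_nhds (hV n))
        hVW hx hy)
    (by
      rintro _ ⟨W, hW, rfl⟩
      have key : ∀ n, (fun a : S n => -a) ⁻¹' W n ∈ @nhds _ (t n) (0 : S n) := by
        intro n
        letI := t n; haveI := htag n
        have hc : Tendsto (fun a : S n => -a) (𝓝 0) (𝓝 0) := by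
          simpa using (continuous_neg (G := S n)).tendsto 0
        exact Filter.mem_map.mp (hc (hW n))
      refine ⟨Wset S fun n => W n ∩ (fun a : S n => -a) ⁻¹' W n,
        ⟨_, fun n => by letI := t n; exact inter_mem (hW n) (key n), rfl⟩, ?_⟩
      intro x hx
      refine map_mem_Wset (fun y : E => -y) (fun a b => by abel) ?_ hx
      rintro i a ⟨_, ha⟩
      exact ⟨-a, ha, by push_cast; ring⟩)
  smul' := by
    rintro _ ⟨W, hW, rfl⟩
    have key : ∀ n, ∃ V : Set (S n), (V ∈ @nhds _ (t n) (0 : S n) ∧ Balanced 𝕜 V) ∧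
        V ⊆ W n := by
      intro n
      letI := t n; haveI := htag n; haveI := hsmul n
      exact (nhds_basis_balanced 𝕜 (S n)).mem_iff.mp (hW n)
    choose V hV hVW using key
    refine ⟨Metric.closedBall (0 : 𝕜) 1, Metric.closedBall_mem_nhds 0 one_pos,
      Wset S V, ⟨V, fun n => (hV n).1, rfl⟩, ?_⟩
    rintro _ ⟨c, hc, x, hx, rfl⟩
    refine map_mem_Wset (fun y : E => c • y) (fun a b => smul_add c a b) ?_ hx
    intro i a ha
    refine ⟨c • a, ?_, by push_cast; ring⟩
    exact hVW i <| (hV i).2 c (by simpa [mem_closedBall_iff_norm] using hc)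
      (smul_mem_smul_set ha)
  smul_left' := by
    rintro x₀ _ ⟨W, hW, rfl⟩
    have key : ∀ n, (fun a : S n => x₀ • a) ⁻¹' W n ∈ @nhds _ (t n) (0 : S n) := by
      intro n
      letI := t n; haveI := htag n; haveI := hsmul n
      have hc0 : Continuous fun a : S n => x₀ • a := continuous_const_smul x₀
      have hc : Tendsto (fun a : S n => x₀ • a) (𝓝 0) (𝓝 0) := by
        simpa using hc0.tendsto (0 : S n)
      exact Filter.mem_map.mp (hc (hW n))
    refine ⟨Wset S fun n => W n ∩ (fun a : S n => x₀ • a) ⁻¹' W n,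
      ⟨_, fun n => by letI := t n; exact inter_mem (hW n) (key n), rfl⟩, ?_⟩
    intro x hx
    refine map_mem_Wset (fun y : E => x₀ • y) (fun a b => smul_add x₀ a b) ?_ hx
    rintro i a ⟨_, ha⟩
    exact ⟨x₀ • a, ha, by push_cast; ring⟩
  smul_right' := by
    rintro m₀ _ ⟨W, hW, rfl⟩
    obtain ⟨N, hN⟩ := hunion m₀
    letI := t N; haveI := htag N; haveI := hsmul N
    have hc : Tendsto (fun c : 𝕜 => c • (⟨m₀, hN⟩ : S N)) (𝓝 0) (𝓝 0) := by
      simpa using (((by fun_prop :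
        Continuous fun c : 𝕜 => c • (⟨m₀, hN⟩ : S N))).tendsto
        (0 : 𝕜))
    filter_upwards [Filter.mem_map.mp (hc (hW N))] with c hc'
    have : c • m₀ = ((c • (⟨m₀, hN⟩ : S N) : S N) : E) := by push_cast; ring
    rw [this]
    exact val_mem_Wset (fun n => by letI := t n; exact mem_of_mem_nhds (hW n)) hc'

end Basis

/-- The uniform direct limit uniformity of an increasing sequence of uniform subspaces of `E`:
the strongest (finest) uniformity on `E` making all inclusions uniformly continuous. -/
noncomputable def uDirLim {E : Type u} (S : ℕ → Set E)
    (u : (n : ℕ) → UniformSpace (S n)) : UniformSpace E :=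
  sInf {u' : UniformSpace E |
    ∀ n, @UniformContinuous _ _ (u n) u' (Subtype.val : S n → E)}

section Main

variable {𝕜 : Type v} [RCLike 𝕜] {E : Type u} [AddCommGroup E] [Module 𝕜 E]

theorem part4 (S : ℕ → Submodule 𝕜 E) (t : (n : ℕ) → TopologicalSpace (S n))
    (htag : ∀ n, @IsTopologicalAddGroup (S n) (t n) _)
    (u : (n : ℕ) → UniformSpace (S n))
    (hbasis : ∀ n, (@uniformity _ (u n)).HasBasis
      (fun U : Set (S n) => U ∈ @nhds _ (t n) (0 : S n))
      (fun U => {p : S n × S n | p.1 - p.2 ∈ U}))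
    (t' : TopologicalSpace E) (htag' : @IsTopologicalAddGroup E t' _)
    (hcont : ∀ n, @Continuous _ _ (t n) t' (fun x : S n => (x : E))) :
    (uDirLim (fun n => (S n : Set E)) u).toTopologicalSpace ≤ t' := by
  letI := t'
  let u' : UniformSpace E := IsTopologicalAddGroup.rightUniformSpace E
  have huni : @uniformity E u' = comap (fun p : E × E => p.2 - p.1) (𝓝 (0 : E)) := by
    simp_rw [sub_eq_add_neg]; rfl
  have hmem : ∀ n, @UniformContinuous _ _ (u n) u' (Subtype.val : ↥(S n : Set E) → E) := by
    intro n
    rw [UniformContinuous, huni, tendsto_comap_iff, tendsto_def]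
    intro V hV
    letI := t n; haveI := htag n
    have hv : (fun x : S n => (x : E)) ⁻¹' V ∈ @nhds _ (t n) (0 : S n) := by
      have h0 : Tendsto (fun x : S n => (x : E)) (𝓝 0) (𝓝 (0 : E)) := by
        simpa using (hcont n).tendsto (0 : S n)
      exact Filter.mem_map.mp (h0 hV)
    have hv' : (fun a : S n => -a) ⁻¹' ((fun x : S n => (x : E)) ⁻¹' V) ∈
        @nhds _ (t n) (0 : S n) := by
      have hcneg : Tendsto (fun a : S n => -a) (𝓝 0) (𝓝 0) := by
        simpa using (continuous_neg (G := S n)).tendsto 0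
      exact Filter.mem_map.mp (hcneg hv)
    refine (hbasis n).mem_iff.mpr ⟨_, hv', ?_⟩
    rintro ⟨p1, p2⟩ hp
    simp only [mem_setOf_eq, mem_preimage] at hp
    rw [neg_sub] at hp
    simpa using hp
  have hle : uDirLim (fun n => (S n : Set E)) u ≤ u' := sInf_le hmem
  exact UniformSpace.toTopologicalSpace_mono hle

end Main
section Crux

variable {𝕜 : Type v} [RCLike 𝕜] {E : Type u} [AddCommGroup E] [Module 𝕜 E]

theorem crux (S : ℕ → Submodule 𝕜 E) (mono : Monotone S) (hunion : ∀ x : E, ∃ n, x ∈ S n)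
    (t : (n : ℕ) → TopologicalSpace (S n))
    (htag : ∀ n, @IsTopologicalAddGroup (S n) (t n) _)
    (hcompat_t : ∀ n, t n =
      TopologicalSpace.induced (⇑(Submodule.inclusion (mono (Nat.le_succ n)))) (t (n + 1)))
    (u : (n : ℕ) → UniformSpace (S n))
    (hbasis : ∀ n, (@uniformity _ (u n)).HasBasis
      (fun U : Set (S n) => U ∈ @nhds _ (t n) (0 : S n))
      (fun U => {p : S n × S n | p.1 - p.2 ∈ U}))
    (u' : UniformSpace E)
    (h' : ∀ n, @UniformContinuous _ _ (u n) u' (Subtype.val : ↥(S n : Set E) → E))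
    (x₀ : E) (D : Set (E × E)) (hD : D ∈ @uniformity E u') :
    ∃ W : (n : ℕ) → Set (S n), (∀ n, W n ∈ @nhds _ (t n) (0 : S n)) ∧
      ∀ w ∈ Wset S W, (x₀, x₀ + w) ∈ D := by
  obtain ⟨n₀, hn₀⟩ := hunion x₀
  -- a sequence of composable entourages
  have hstep : ∀ p : {s : Set (E × E) // s ∈ @uniformity E u'},
      ∃ q : {s : Set (E × E) // s ∈ @uniformity E u'}, SetRel.comp q.1 q.1 ⊆ p.1 := by
    rintro ⟨s, hs⟩
    rcases @comp_mem_uniformity_sets E u' s hs with ⟨s', hs', h⟩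
    exact ⟨⟨s', hs'⟩, h⟩
  choose f hf using hstep
  let Dseq : ℕ → {s : Set (E × E) // s ∈ @uniformity E u'} :=
    fun k => Nat.rec ⟨D, hD⟩ (fun _ p => f p) k
  have hcomp : ∀ k, SetRel.comp (Dseq (k + 1)).1 (Dseq (k + 1)).1 ⊆ (Dseq k).1 :=
    fun k => hf (Dseq k)
  have href : ∀ k (x : E), (x, x) ∈ (Dseq k).1 :=
    fun k x => @refl_mem_uniformity E u' x _ (Dseq k).2
  -- moduli of uniform continuity of the inclusions
  have key : ∀ m k, ∃ V : Set (S m), V ∈ @nhds _ (t m) (0 : S m) ∧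
      ∀ p : S m × S m, p.1 - p.2 ∈ V → ((p.1 : E), (p.2 : E)) ∈ (Dseq k).1 := by
    intro m k
    have h2 : (fun x : S m × S m => ((x.1 : E), (x.2 : E))) ⁻¹' (Dseq k).1 ∈
        @uniformity _ (u m) :=
      Filter.mem_map.mp (h' m (Dseq k).2)
    rcases (hbasis m).mem_iff.mp h2 with ⟨V, hV, hsub⟩
    exact ⟨V, hV, fun p hp => hsub hp⟩
  choose V hV1 hV2 using key
  -- the desired neighborhoods
  refine ⟨fun j => (fun a : S j =>
      -(Submodule.inclusion (mono (le_max_left j n₀)) a)) ⁻¹' V (max j n₀) (j + 1),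
    ?_, ?_⟩
  · intro j
    have hcont : @Continuous _ _ (t j) (t (max j n₀))
        (fun a : S j => -(Submodule.inclusion (mono (le_max_left j n₀)) a)) := by
      letI := t (max j n₀); haveI := htag (max j n₀)
      exact Continuous.comp continuous_neg (incl_cont mono t hcompat_t (le_max_left j n₀))
    have htd : Tendsto (fun a : S j => -(Submodule.inclusion (mono (le_max_left j n₀)) a))
        (@nhds _ (t j) 0) (@nhds _ (t (max j n₀)) 0) := by
      simpa using @Continuous.tendsto _ _ (t j) (t (max j n₀)) _ hcont 0
    exact Filter.mem_map.mp (htd (hV1 (max j n₀) (j + 1)))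
  · intro w hw
    rcases mem_iUnion.mp hw with ⟨m, hm⟩
    obtain ⟨g, hg, rfl⟩ := mem_psum_exists hm
    set z : ℕ → E := fun j => x₀ + ∑ i ∈ Finset.range j, ((g i : E)) with hz
    have hzmem : ∀ j, z j ∈ S (max j n₀) := by
      intro j
      refine Submodule.add_mem _ (mono (le_max_right j n₀) hn₀)
        (Submodule.sum_mem _ fun i hi => mono ?_ (g i).2)
      exact le_trans (le_of_lt (Finset.mem_range.mp hi)) (le_max_left j n₀)
    have hzsucc : ∀ j, z (j + 1) = z j + (g j : E) := by
      intro j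
      simp [hz, Finset.sum_range_succ, add_assoc]
    have hzmem' : ∀ j, z (j + 1) ∈ S (max j n₀) := by
      intro j
      rw [hzsucc j]
      exact Submodule.add_mem _ (hzmem j) (mono (le_max_left j n₀) (g j).2)
    have hpair : ∀ j ≤ m, (z j, z (j + 1)) ∈ (Dseq (j + 1)).1 := by
      intro j hj
      have hgj := hg j hj
      have heq : (⟨z j, hzmem j⟩ : S (max j n₀)) - ⟨z (j + 1), hzmem' j⟩ =
          -(Submodule.inclusion (mono (le_max_left j n₀)) (g j)) := by
        apply Subtype.ext
        simp only [AddSubgroupClass.coe_sub, NegMemClass.coe_neg, Submodule.coe_inclusion,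
          hzsucc j]
        abel
      exact hV2 (max j n₀) (j + 1) (⟨z j, hzmem j⟩, ⟨z (j + 1), hzmem' j⟩)
        (by rw [heq]; exact hgj)
    have hchain := chain_comp href
      (fun k x y zz hxy hyz => hcomp k ⟨y, hxy, hyz⟩) m 0 z
      (fun j hj => by simpa [Nat.zero_add] using hpair j hj)
    simpa [hz] using (show (z 0, z (m + 1)) ∈ D from hchain)

end Crux
/-- Let `(X_n)` be an increasing sequence of linear subspaces of a vector space `E` over
`𝕜 ∈ {ℝ, ℂ}` with union `E`, each carrying a vector topology making it a topological linear
subspace of the next one, and each carrying the uniformity of its additive topological group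
(with basic entourages `{(x,y) : x - y ∈ U}`, `U` a neighborhood of `0`), so that `(X_n)` is
a tower of uniform spaces.  Then the uniform direct limit `u-lim X_n`, i.e. `E` with the
topology induced by the direct limit uniformity, is a topological vector space; moreover this
topology makes all inclusions `X_n → E` continuous and is the strongest (finest) topology
turning `E` into a topological vector space and making all inclusions continuous, i.e. the
identity map `u-lim X_n → l-lim X_n` is a homeomorphism. -/
theorem statement12 {𝕜 : Type v} [RCLike 𝕜] {E : Type u} [AddCommGroup E] [Module 𝕜 E]
    (S : ℕ → Submodule 𝕜 E) (mono : Monotone S) (hunion : ∀ x : E, ∃ n, x ∈ S n)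
    (t : (n : ℕ) → TopologicalSpace (S n))
    (htag : ∀ n, @IsTopologicalAddGroup (S n) (t n) _)
    (hsmul : ∀ n, @ContinuousSMul 𝕜 (S n) _ _ (t n))
    (hcompat_t : ∀ n, t n =
      TopologicalSpace.induced (⇑(Submodule.inclusion (mono (Nat.le_succ n)))) (t (n + 1)))
    (u : (n : ℕ) → UniformSpace (S n))
    (htop : ∀ n, (u n).toTopologicalSpace = t n)
    (hbasis : ∀ n, (@uniformity _ (u n)).HasBasis
      (fun U : Set (S n) => U ∈ @nhds _ (t n) (0 : S n))
      (fun U => {p : S n × S n | p.1 - p.2 ∈ U}))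
    (hcompat_u : ∀ n, u n =
      UniformSpace.comap (⇑(Submodule.inclusion (mono (Nat.le_succ n)))) (u (n + 1))) :
    @IsTopologicalAddGroup E
        (uDirLim (fun n => (S n : Set E)) u).toTopologicalSpace _ ∧
      @ContinuousSMul 𝕜 E _ _
        (uDirLim (fun n => (S n : Set E)) u).toTopologicalSpace ∧
      (∀ n, @Continuous _ _ (t n)
        (uDirLim (fun n => (S n : Set E)) u).toTopologicalSpace
        (fun x : S n => (x : E))) ∧
      ∀ t' : TopologicalSpace E, @IsTopologicalAddGroup E t' _ →
        @ContinuousSMul 𝕜 E _ _ t' →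
        (∀ n, @Continuous _ _ (t n) t' (fun x : S n => (x : E))) →
        (uDirLim (fun n => (S n : Set E)) u).toTopologicalSpace ≤ t' := by
  classical
  let B : ModuleFilterBasis 𝕜 E := limBasis S hunion t htag hsmul
  -- the inclusions are continuous for the direct limit vector topology `B.topology`
  have hconTau : ∀ n, @Continuous _ _ (t n) B.topology (fun x : S n => (x : E)) := by
    intro n
    rw [@continuous_iff_continuousAt _ _ (t n) B.topology]
    intro x
    have hb := B.toAddGroupFilterBasis.nhds_hasBasis ((x : E))
    refine hb.tendsto_right_iff.mpr ?_
    rintro _ ⟨W, hW, rfl⟩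
    letI := t n; haveI := htag n
    have hsub : Tendsto (fun a : S n => a - x) (𝓝 x) (𝓝 0) := by
      simpa using ((by fun_prop :
        Continuous fun a : S n => a - x)).tendsto x
    filter_upwards [Filter.mem_map.mp (hsub (hW n))] with a ha
    refine ⟨((a - x : S n) : E),
      val_mem_Wset (fun i => by letI := t i; exact mem_of_mem_nhds (hW i)) ha, ?_⟩
    push_cast
    abel
  haveI hBtag : @IsTopologicalAddGroup E B.topology _ :=
    B.toAddGroupFilterBasis.isTopologicalAddGroup
  have le1 : (uDirLim (fun n => (S n : Set E)) u).toTopologicalSpace ≤ B.topology :=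
    part4 S t htag u hbasis B.topology hBtag hconTau
  have le2 : B.topology ≤ (uDirLim (fun n => (S n : Set E)) u).toTopologicalSpace := by
    rw [uDirLim, UniformSpace.toTopologicalSpace_sInf]
    refine le_iInf fun u' => le_iInf fun hu' => ?_
    refine le_of_nhds_le_nhds fun x₀ => ?_
    intro s hs
    rw [@nhds_eq_comap_uniformity E u' x₀, mem_comap] at hs
    obtain ⟨D, hD, hDs⟩ := hs
    obtain ⟨W, hW, hWD⟩ := crux S mono hunion t htag hcompat_t u hbasis u' hu' x₀ D hD
    refine (B.toAddGroupFilterBasis.nhds_hasBasis x₀).mem_iff.mpr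
      ⟨Wset S W, ⟨W, hW, rfl⟩, ?_⟩
    rintro _ ⟨w, hw, rfl⟩
    exact hDs (hWD w hw)
  have hEq : (uDirLim (fun n => (S n : Set E)) u).toTopologicalSpace = B.topology :=
    le_antisymm le1 le2
  refine ⟨?_, ?_, fun n => ?_, fun t' h1 h2 h3 => part4 S t htag u hbasis t' h1 h3⟩
  · rw [hEq]; exact hBtag
  · rw [hEq]; exact B.continuousSMul
  · rw [hEq]; exact hconTau n
end

section
/- Let (X_n)_{n∈ω} be an increasing sequence of locally convex topological vector spaces over ℝ (or ℂ) in which each X_n is a linear subspace of X_{n+1} carrying the subspace topology, and each X_n carries the uniformity of its additive topological group. Then the uniform direct limit u-lim X_n is a locally convex topological vector space; consequently its topology is the strongest topology on X = ⋃_n X_n turning X into a locally convex topological vector space and making all inclusions X_n → X continuous, i.e., the identity map u-lim X_n → lc-lim X_n is a homeomorphism. -/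
open Set Filter Topology

universe u

section Aux

open Pointwise

namespace Stmt13Aux
theorem neg_nhds_zero {F : Type*} [AddGroup F] [TopologicalSpace F] [IsTopologicalAddGroup F]
    {s : Set F} (h : s ∈ 𝓝 (0 : F)) : -s ∈ 𝓝 (0 : F) :=
  continuous_neg.continuousAt.preimage_mem_nhds (by simpa using h)

theorem exists_symm_convex {F : Type*} [AddCommGroup F] [Module ℝ F] [TopologicalSpace F]
    [IsTopologicalAddGroup F] [LocallyConvexSpace ℝ F] {U : Set F} (hU : U ∈ 𝓝 (0 : F)) :
    ∃ D : Set F, D ∈ 𝓝 (0 : F) ∧ Convex ℝ D ∧ (∀ a ∈ D, -a ∈ D) ∧ D ⊆ U := by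
  obtain ⟨C, ⟨hC, hCc⟩, hCU⟩ := (LocallyConvexSpace.convex_basis_zero ℝ F).mem_iff.mp hU
  refine ⟨C ∩ -C, inter_mem hC (neg_nhds_zero hC), hCc.inter hCc.neg, ?_, fun a ha => hCU ha.1⟩
  rintro a ⟨h1, h2⟩
  exact ⟨h2, by simpa using h1⟩

variable {E : Type u} [AddCommGroup E] [Module ℝ E]

/-- The candidate neighborhoods of zero for the locally convex direct limit topology. -/
def Wsets (S : ℕ → Submodule ℝ E) (t : (n : ℕ) → TopologicalSpace (S n)) : Set (Set E) :=
  {W | Convex ℝ W ∧ ∀ n, (Subtype.val ⁻¹' W : Set (S n)) ∈ @nhds _ (t n) 0}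

theorem zero_mem_W {S : ℕ → Submodule ℝ E} {t : (n : ℕ) → TopologicalSpace (S n)}
    {U : Set E} (hU : U ∈ Wsets S t) : (0 : E) ∈ U := by
  letI := t 0
  have := mem_of_mem_nhds (hU.2 0)
  simpa using this

theorem preimage_val_smul {c : ℝ} (hc : c ≠ 0) (p : Submodule ℝ E) (U : Set E) :
    (Subtype.val ⁻¹' (c • U) : Set p) = c • (Subtype.val ⁻¹' U) := by
  ext x
  simp only [Set.mem_preimage, mem_smul_set_iff_inv_smul_mem₀ hc, SetLike.val_smul]

theorem smul_W {S : ℕ → Submodule ℝ E} {t : (n : ℕ) → TopologicalSpace (S n)}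
    (hsmul : ∀ n, @ContinuousSMul ℝ (S n) _ _ (t n))
    {U : Set E} (hU : U ∈ Wsets S t) {c : ℝ} (hc : c ≠ 0) : c • U ∈ Wsets S t := by
  refine ⟨hU.1.smul c, fun n => ?_⟩
  letI := t n
  haveI := hsmul n
  rw [preimage_val_smul hc]
  have := smul_mem_nhds_smul₀ hc (hU.2 n)
  simpa using this

theorem neg_W {S : ℕ → Submodule ℝ E} {t : (n : ℕ) → TopologicalSpace (S n)}
    (htag : ∀ n, @IsTopologicalAddGroup (S n) (t n) _)
    {U : Set E} (hU : U ∈ Wsets S t) : -U ∈ Wsets S t := by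
  refine ⟨hU.1.neg, fun n => ?_⟩
  letI := t n
  haveI := htag n
  have : (Subtype.val ⁻¹' (-U) : Set (S n)) = -(Subtype.val ⁻¹' U) := by
    ext x; simp [Set.mem_neg]
  rw [this]
  exact neg_nhds_zero (hU.2 n)

theorem inter_W {S : ℕ → Submodule ℝ E} {t : (n : ℕ) → TopologicalSpace (S n)}
    {U V : Set E} (hU : U ∈ Wsets S t) (hV : V ∈ Wsets S t) : U ∩ V ∈ Wsets S t := by
  refine ⟨hU.1.inter hV.1, fun n => ?_⟩
  letI := t n
  rw [Set.preimage_inter]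
  exact inter_mem (hU.2 n) (hV.2 n)

/-- The module filter basis generating the locally convex direct limit topology. -/
def WB (S : ℕ → Submodule ℝ E) (t : (n : ℕ) → TopologicalSpace (S n))
    (htag : ∀ n, @IsTopologicalAddGroup (S n) (t n) _)
    (hsmul : ∀ n, @ContinuousSMul ℝ (S n) _ _ (t n))
    (hunion : ∀ x : E, ∃ n, x ∈ S n) : ModuleFilterBasis ℝ E where
  sets := Wsets S t
  nonempty := ⟨univ, convex_univ, fun n => by letI := t n; simpa using univ_mem⟩
  inter_sets := fun hx hy => ⟨_, inter_W hx hy, subset_rfl⟩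
  zero' := fun hU => zero_mem_W hU
  add' := by
    intro U hU
    refine ⟨(2⁻¹ : ℝ) • U, smul_W hsmul hU (by norm_num), ?_⟩
    have h2 : (2⁻¹ : ℝ) • U + (2⁻¹ : ℝ) • U = ((2⁻¹ : ℝ) + 2⁻¹) • U :=
      (hU.1.add_smul (by norm_num) (by norm_num)).symm
    rw [h2]
    norm_num
  neg' := fun {U} hU => ⟨-U, neg_W htag hU, fun x hx => hx⟩
  conj' := fun x₀ {U} hU => ⟨U, hU, fun x hx => by simpa using hx⟩
  smul' := by
    intro U hU
    refine ⟨Metric.closedBall 0 1, Metric.closedBall_mem_nhds 0 one_pos,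
      U ∩ -U, inter_W hU (neg_W htag hU), ?_⟩
    rintro x ⟨c, hc, w, hw, rfl⟩
    have hc' : |c| ≤ 1 := by simpa [Real.dist_eq] using hc
    have hconv : Convex ℝ (U ∩ -U) := hU.1.inter hU.1.neg
    have hwneg : -w ∈ U ∩ -U := ⟨hw.2, by simpa using hw.1⟩
    have ha : (0:ℝ) ≤ (1 + c) / 2 := by cases abs_le.mp hc'; linarith
    have hb : (0:ℝ) ≤ (1 - c) / 2 := by cases abs_le.mp hc'; linarith
    have hab : (1 + c) / 2 + (1 - c) / 2 = (1:ℝ) := by ring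
    have hmem := hconv hw hwneg ha hb hab
    have : ((1 + c) / 2) • w + ((1 - c) / 2) • (-w) = c • w := by
      rw [smul_neg, ← sub_eq_add_neg, ← sub_smul]
      congr 1
      ring
    rw [this] at hmem
    exact hmem.1
  smul_left' := by
    intro c U hU
    rcases eq_or_ne c 0 with rfl | hc
    · exact ⟨U, hU, fun x _ => by simpa using zero_mem_W hU⟩
    · refine ⟨c⁻¹ • U, smul_W hsmul hU (inv_ne_zero hc), fun x hx => ?_⟩
      have := (mem_smul_set_iff_inv_smul_mem₀ (inv_ne_zero hc) _ _).mp hx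
      rwa [inv_inv] at this
  smul_right' := by
    intro m₀ U hU
    obtain ⟨n, hn⟩ := hunion m₀
    letI := t n
    haveI := hsmul n
    have hten : Filter.Tendsto (fun c : ℝ => c • (⟨m₀, hn⟩ : S n)) (𝓝 0) (𝓝 0) := by
      have := (continuous_id.smul (continuous_const (y := (⟨m₀, hn⟩ : S n)))).tendsto (0 : ℝ)
      convert this using 2
      · rfl
      · exact (zero_smul ℝ (⟨m₀, hn⟩ : S n)).symm
    have := hten (hU.2 n)
    rw [Filter.mem_map] at this
    filter_upwards [this] with c hc
    exact hc

def sumSets (g : ℕ → Set E) : ℕ → ℕ → Set E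
  | K, 0 => g K
  | K, m + 1 => g K + sumSets g (K + 1) m

theorem zero_mem_sumSets {g : ℕ → Set E} (h0 : ∀ k, (0 : E) ∈ g k) (K m : ℕ) :
    (0 : E) ∈ sumSets g K m := by
  induction m generalizing K with
  | zero => exact h0 K
  | succ m ih => simpa [sumSets] using Set.add_mem_add (h0 K) (ih (K + 1))

theorem subset_sumSets {g : ℕ → Set E} (h0 : ∀ k, (0 : E) ∈ g k) (K m : ℕ) :
    g (K + m) ⊆ sumSets g K m := by
  induction m generalizing K with
  | zero => exact subset_rfl
  | succ m ih =>
    intro x hx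
    have hx' : x ∈ g (K + 1 + m) := by rwa [show K + 1 + m = K + (m + 1) by omega]
    simpa [sumSets] using Set.add_mem_add (h0 K) (ih (K + 1) hx')

theorem sumSets_mono {g : ℕ → Set E} (h0 : ∀ k, (0 : E) ∈ g k) :
    ∀ K, Monotone (sumSets g K) := by
  have step : ∀ m K, sumSets g K m ⊆ sumSets g K (m + 1) := by
    intro m
    induction m with
    | zero =>
      intro K x hx
      simpa [sumSets] using Set.add_mem_add hx (h0 (K + 1))
    | succ m ih =>
      intro K
      show g K + sumSets g (K + 1) m ⊆ g K + sumSets g (K + 1) (m + 1)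
      exact Set.add_subset_add_left (ih (K + 1))
  intro K
  exact monotone_nat_of_le_succ fun m => step m K

theorem convex_sumSets {g : ℕ → Set E} (hc : ∀ k, Convex ℝ (g k)) (K m : ℕ) :
    Convex ℝ (sumSets g K m) := by
  induction m generalizing K with
  | zero => exact hc K
  | succ m ih => exact (hc K).add (ih (K + 1))

/-- Transitivity of the subspace-topology compatibility. -/
theorem compat_trans (S : ℕ → Submodule ℝ E) (mono : Monotone S)
    (t : (n : ℕ) → TopologicalSpace (S n))
    (hcompat_t : ∀ n, t n =
      TopologicalSpace.induced (⇑(Submodule.inclusion (mono (Nat.le_succ n)))) (t (n + 1))) :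
    ∀ n m (h : n ≤ m), t n =
      TopologicalSpace.induced (⇑(Submodule.inclusion (mono h))) (t m) := by
  intro n m h
  induction m, h using Nat.le_induction with
  | base =>
    have h1 : ⇑(Submodule.inclusion (mono (le_refl n))) = id := funext fun x => Subtype.ext rfl
    rw [h1, induced_id]
  | succ m hnm ih =>
    have h2 : ⇑(Submodule.inclusion (mono (Nat.le_succ m))) ∘
        ⇑(Submodule.inclusion (mono hnm)) =
        ⇑(Submodule.inclusion (mono (Nat.le_succ_of_le hnm))) :=
      funext fun x => Subtype.ext rfl
    rw [ih, hcompat_t m, induced_compose, h2]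

/-- The key chain argument: every ball of any uniformity making the inclusions uniformly
continuous contains a translated member of `Wsets`. -/
theorem chain (S : ℕ → Submodule ℝ E) (mono : Monotone S) (hunion : ∀ x : E, ∃ n, x ∈ S n)
    (t : (n : ℕ) → TopologicalSpace (S n))
    (htag : ∀ n, @IsTopologicalAddGroup (S n) (t n) _)
    (hlcs : ∀ n, @LocallyConvexSpace ℝ (S n) _ _ _ _ (t n))
    (hcompat_t : ∀ n, t n =
      TopologicalSpace.induced (⇑(Submodule.inclusion (mono (Nat.le_succ n)))) (t (n + 1)))
    (u : (n : ℕ) → UniformSpace (S n))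
    (hbasis : ∀ n, (@uniformity _ (u n)).HasBasis
      (fun U : Set (S n) => U ∈ @nhds _ (t n) (0 : S n))
      (fun U => {p : S n × S n | p.1 - p.2 ∈ U}))
    (u' : UniformSpace E)
    (hu' : ∀ n, @UniformContinuous _ _ (u n) u' (Subtype.val : S n → E))
    (x : E) (V : Set (E × E)) (hV : V ∈ @uniformity E u') :
    ∃ W ∈ Wsets S t, ∀ w ∈ W, (x, x + w) ∈ V := by
  classical
  obtain ⟨N, hxN⟩ := hunion x
  -- a chain of entourages
  have hstep : ∀ W : Set (E × E), W ∈ @uniformity E u' →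
      ∃ W', W' ∈ @uniformity E u' ∧ SetRel.comp W' W' ⊆ W := by
    intro W hW
    obtain ⟨W', h1, h2⟩ := @comp_mem_uniformity_sets E u' W hW
    exact ⟨W', h1, h2⟩
  let Vs : ℕ → {W : Set (E × E) // W ∈ @uniformity E u'} := fun k =>
    Nat.rec ⟨V, hV⟩ (fun _ p => ⟨(hstep p.1 p.2).choose, (hstep p.1 p.2).choose_spec.1⟩) k
  have hVs0 : (Vs 0).1 = V := rfl
  have hVscomp : ∀ k, SetRel.comp (Vs (k + 1)).1 (Vs (k + 1)).1 ⊆ (Vs k).1 := fun k =>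
    (hstep (Vs k).1 (Vs k).2).choose_spec.2
  have hVsmono : ∀ k, (Vs (k + 1)).1 ⊆ (Vs k).1 := by
    intro k p hp
    rcases p with ⟨a, b⟩
    exact hVscomp k ⟨a, @refl_mem_uniformity E u' a _ (Vs (k + 1)).2, hp⟩
  have hVsle : ∀ k l, k ≤ l → (Vs l).1 ⊆ (Vs k).1 := by
    intro k l hkl
    induction hkl with
    | refl => exact subset_rfl
    | step _ ih => exact (hVsmono _).trans ih
  -- good neighborhoods in each step space
  have hD : ∀ n, ∃ D : Set (S n), D ∈ @nhds _ (t n) 0 ∧ Convex ℝ D ∧ (∀ a ∈ D, -a ∈ D) ∧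
      ∀ a b : S n, a - b ∈ D → ((a : E), (b : E)) ∈ (Vs (n + 1)).1 := by
    intro n
    letI := t n
    haveI := htag n
    haveI := hlcs n
    have hpre : (fun p : S n × S n => ((p.1 : E), (p.2 : E))) ⁻¹' (Vs (n + 1)).1
        ∈ @uniformity _ (u n) := hu' n (Vs (n + 1)).2
    rw [(hbasis n).mem_iff] at hpre
    obtain ⟨U, hU, hUsub⟩ := hpre
    obtain ⟨D, hD1, hD2, hD3, hD4⟩ := exists_symm_convex hU
    exact ⟨D, hD1, hD2, hD3, fun a b hab => hUsub (show (a, b) ∈ {p : S n × S n | p.1 - p.2 ∈ U} from hD4 hab)⟩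
  choose D hD1 hD2 hD3 hD4 using hD
  set g : ℕ → Set E := fun k => Subtype.val '' D k with hg
  have hg0 : ∀ k, (0 : E) ∈ g k := by
    intro k
    letI := t k
    exact ⟨0, mem_of_mem_nhds (hD1 k), rfl⟩
  have hgconv : ∀ k, Convex ℝ (g k) := fun k => (hD2 k).linear_image (S k).subtype
  -- the pair estimate
  have pairVs : ∀ K (z : E) (hz : z ∈ S K) (d : S K) (hd : d ∈ D K),
      (z, z + (d : E)) ∈ (Vs (K + 1)).1 := by
    intro K z hz d hd
    have hmem : (⟨z, hz⟩ : S K) - (⟨z, hz⟩ + d) = -d := by abel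
    have h := hD4 K ⟨z, hz⟩ (⟨z, hz⟩ + d) (by rw [hmem]; exact hD3 K d hd)
    simpa using h
  have key : ∀ m K, ∀ z : E, z ∈ S K → ∀ w ∈ sumSets g K m, (z, z + w) ∈ (Vs K).1 := by
    intro m
    induction m with
    | zero =>
      rintro K z hz w ⟨d, hd, rfl⟩
      exact hVsmono K (pairVs K z hz d hd)
    | succ m ih =>
      rintro K z hz w hw
      rw [show sumSets g K (m + 1) = g K + sumSets g (K + 1) m from rfl] at hw
      obtain ⟨w1, hw1, w2, hw2, rfl⟩ := hw
      obtain ⟨d, hd, rfl⟩ := hw1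
      have hzd : z + (d : E) ∈ S (K + 1) :=
        mono (Nat.le_succ K) ((S K).add_mem hz d.2)
      have h1 : (z, z + (d : E)) ∈ (Vs (K + 1)).1 := pairVs K z hz d hd
      have h2 : (z + (d : E), z + (d : E) + w2) ∈ (Vs (K + 1)).1 :=
        ih (K + 1) _ hzd w2 hw2
      have h3 : (z, z + (d : E) + w2) ∈ (Vs K).1 := hVscomp K (SetRel.prodMk_mem_comp h1 h2)
      rwa [add_assoc] at h3
  -- assemble W
  refine ⟨⋃ m, sumSets g N m, ⟨?_, ?_⟩, ?_⟩
  · exact Directed.convex_iUnion ((sumSets_mono hg0 N).directed_le)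
      (fun m => convex_sumSets hgconv N m)
  · intro n
    letI := t n
    set M := max n N with hM
    have hnM : n ≤ M := le_max_left n N
    have hincl : (⇑(Submodule.inclusion (mono hnM)) ⁻¹' (D M) : Set (S n))
        ∈ @nhds _ (t n) 0 := by
      rw [compat_trans S mono t hcompat_t n M hnM, nhds_induced]
      have h0 : (Submodule.inclusion (mono hnM)) (0 : S n) = 0 := by simp
      rw [h0]
      exact preimage_mem_comap (hD1 M)
    refine mem_of_superset hincl ?_
    intro y hy
    have hyW : (y : E) ∈ g M := ⟨Submodule.inclusion (mono hnM) y, hy, rfl⟩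
    have : g M ⊆ ⋃ m, sumSets g N m := by
      have h1 := subset_sumSets hg0 N (M - N)
      rw [show N + (M - N) = M by omega] at h1
      exact h1.trans (subset_iUnion _ (M - N))
    exact this hyW
  · intro w hw
    obtain ⟨m, hm⟩ := mem_iUnion.mp hw
    exact hVsle 0 N (Nat.zero_le N) (key m N x hxN w hm)

theorem uEq (S : ℕ → Submodule ℝ E) (t : (n : ℕ) → TopologicalSpace (S n))
    (htag : ∀ n, @IsTopologicalAddGroup (S n) (t n) _)
    (u : (n : ℕ) → UniformSpace (S n))
    (hbasis : ∀ n, (@uniformity _ (u n)).HasBasis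
      (fun U : Set (S n) => U ∈ @nhds _ (t n) (0 : S n))
      (fun U => {p : S n × S n | p.1 - p.2 ∈ U})) (n : ℕ) :
    u n = @IsTopologicalAddGroup.rightUniformSpace (S n) _ (t n) (htag n) := by
  letI := t n
  haveI := htag n
  refine UniformSpace.ext ?_
  have h1 : @uniformity _ (u n) = comap (fun p : S n × S n => p.1 - p.2) (𝓝 0) :=
    (hbasis n).eq_of_same_basis (((𝓝 (0 : S n)).basis_sets).comap _)
  have h2 : @uniformity _ (IsTopologicalAddGroup.rightUniformSpace (S n)) =
      comap (fun p : S n × S n => p.2 - p.1) (𝓝 0) := by simp only [sub_eq_add_neg]; rfl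
  rw [h1, h2]
  have h3 : (fun p : S n × S n => p.1 - p.2) =
      (fun y : S n => -y) ∘ (fun p : S n × S n => p.2 - p.1) := by
    funext p; simp [neg_sub]
  have h4 : comap (fun y : S n => -y) (𝓝 (0 : S n)) = 𝓝 (0 : S n) := by
    have := (Homeomorph.neg (S n)).comap_nhds_eq (0 : S n)
    simpa [Homeomorph.neg] using this
  rw [h3, ← Filter.comap_comap, h4]

end Stmt13Aux

end Aux

/-- Let `(X_n)` be an increasing sequence of linear subspaces of a real vector space `E` with
union `E`, each carrying a locally convex vector topology making it a topological linear
subspace of the next one, and each carrying the uniformity of its additive topological group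
(with basic entourages `{(x,y) : x - y ∈ U}`, `U` a neighborhood of `0`).  Then the uniform
direct limit `u-lim X_n`, i.e. `E` with the topology induced by the direct limit uniformity,
is a locally convex topological vector space; moreover this topology makes all inclusions
`X_n → E` continuous and is the strongest (finest) topology turning `E` into a locally convex
topological vector space and making all inclusions continuous, i.e. the identity map
`u-lim X_n → lc-lim X_n` is a homeomorphism. -/
theorem statement13 {E : Type u} [AddCommGroup E] [Module ℝ E]
    (S : ℕ → Submodule ℝ E) (mono : Monotone S) (hunion : ∀ x : E, ∃ n, x ∈ S n)
    (t : (n : ℕ) → TopologicalSpace (S n))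
    (htag : ∀ n, @IsTopologicalAddGroup (S n) (t n) _)
    (hsmul : ∀ n, @ContinuousSMul ℝ (S n) _ _ (t n))
    (hlcs : ∀ n, @LocallyConvexSpace ℝ (S n) _ _ _ _ (t n))
    (hcompat_t : ∀ n, t n =
      TopologicalSpace.induced (⇑(Submodule.inclusion (mono (Nat.le_succ n)))) (t (n + 1)))
    (u : (n : ℕ) → UniformSpace (S n))
    (htop : ∀ n, (u n).toTopologicalSpace = t n)
    (hbasis : ∀ n, (@uniformity _ (u n)).HasBasis
      (fun U : Set (S n) => U ∈ @nhds _ (t n) (0 : S n))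
      (fun U => {p : S n × S n | p.1 - p.2 ∈ U}))
    (hcompat_u : ∀ n, u n =
      UniformSpace.comap (⇑(Submodule.inclusion (mono (Nat.le_succ n)))) (u (n + 1))) :
    @IsTopologicalAddGroup E
        (uDirLim (fun n => (S n : Set E)) u).toTopologicalSpace _ ∧
      @ContinuousSMul ℝ E _ _
        (uDirLim (fun n => (S n : Set E)) u).toTopologicalSpace ∧
      @LocallyConvexSpace ℝ E _ _ _ _
        (uDirLim (fun n => (S n : Set E)) u).toTopologicalSpace ∧
      (∀ n, @Continuous _ _ (t n)
        (uDirLim (fun n => (S n : Set E)) u).toTopologicalSpace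
        (fun x : S n => (x : E))) ∧
      ∀ t' : TopologicalSpace E, @IsTopologicalAddGroup E t' _ →
        @ContinuousSMul ℝ E _ _ t' →
        @LocallyConvexSpace ℝ E _ _ _ _ t' →
        (∀ n, @Continuous _ _ (t n) t' (fun x : S n => (x : E))) →
        (uDirLim (fun n => (S n : Set E)) u).toTopologicalSpace ≤ t' := by
  classical
  let B : ModuleFilterBasis ℝ E := Stmt13Aux.WB S t htag hsmul hunion
  let T : TopologicalSpace E := B.topology
  have hTag : @IsTopologicalAddGroup E T _ := B.toAddGroupFilterBasis.isTopologicalAddGroup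
  have hTsmul : @ContinuousSMul ℝ E _ _ T := B.continuousSMul
  have hTlcs : @LocallyConvexSpace ℝ E _ _ _ _ T := by
    letI := T
    haveI := hTag
    exact LocallyConvexSpace.ofBasisZero ℝ E _ _
      B.toAddGroupFilterBasis.nhds_zero_hasBasis
      (fun V hV => (show V ∈ Stmt13Aux.Wsets S t from hV).1)
  have hcontT : ∀ n, @Continuous _ _ (t n) T (fun x : S n => (x : E)) := by
    intro n
    letI := T
    haveI := hTag
    letI := t n
    haveI := htag n
    refine continuous_of_continuousAt_zero ((S n).subtype.toAddMonoidHom) ?_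
    have h0 : ((S n).subtype.toAddMonoidHom) (0 : S n) = (0 : E) := by simp
    rw [ContinuousAt, h0, B.toAddGroupFilterBasis.nhds_zero_hasBasis.tendsto_right_iff]
    intro W hW
    filter_upwards [(show W ∈ Stmt13Aux.Wsets S t from hW).2 n] with y hy using hy
  have hUAG : ∀ n, @IsUniformAddGroup (S n) (u n) _ := by
    intro n
    rw [Stmt13Aux.uEq S t htag u hbasis n]
    letI := t n
    haveI := htag n
    exact isUniformAddGroup_of_addCommGroup
  -- the generic upper-bound estimate
  have step2 : ∀ t' : TopologicalSpace E, @IsTopologicalAddGroup E t' _ →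
      (∀ n, @Continuous _ _ (t n) t' (fun x : S n => (x : E))) →
      (uDirLim (fun n => (S n : Set E)) u).toTopologicalSpace ≤ t' := by
    intro t' htag' hcont
    letI := t'
    haveI := htag'
    letI u' : UniformSpace E := IsTopologicalAddGroup.rightUniformSpace E
    haveI hUE : IsUniformAddGroup E := isUniformAddGroup_of_addCommGroup
    have hmem : ∀ n, @UniformContinuous _ _ (u n) u'
        (Subtype.val : ((S n : Set E)) → E) := by
      intro n
      letI := u n
      haveI := hUAG n
      have hc : @Continuous (S n) E ((u n).toTopologicalSpace) t'
          ((S n).subtype.toAddMonoidHom) := by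
        rw [htop n]; exact hcont n
      exact uniformContinuous_addMonoidHom_of_continuous hc
    have hle : uDirLim (fun n => (S n : Set E)) u ≤ u' := sInf_le hmem
    exact UniformSpace.toTopologicalSpace_mono hle
  -- the lower bound via the chain argument
  have step3 : T ≤ (uDirLim (fun n => (S n : Set E)) u).toTopologicalSpace := by
    rw [show uDirLim (fun n => (S n : Set E)) u = sInf {u' : UniformSpace E |
        ∀ n, @UniformContinuous _ _ (u n) u'
          (Subtype.val : ((S n : Set E)) → E)} from rfl,
      UniformSpace.toTopologicalSpace_sInf]
    refine le_iInf fun u' => le_iInf fun hu' => ?_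
    refine (le_iff_nhds T _).mpr fun x => Filter.le_def.mpr fun s hs => ?_
    rw [@nhds_eq_comap_uniformity E u' x, mem_comap] at hs
    obtain ⟨V, hV, hVs⟩ := hs
    obtain ⟨W, hW, hWV⟩ :=
      Stmt13Aux.chain S mono hunion t htag hlcs hcompat_t u hbasis u' hu' x V hV
    have hmem : ((fun y => x + y) '' W) ∈ @nhds E T x :=
      (B.toAddGroupFilterBasis.nhds_hasBasis x).mem_of_mem hW
    refine mem_of_superset hmem ?_
    rintro _ ⟨w, hw, rfl⟩
    exact hVs (hWV w hw)
  have hEq : (uDirLim (fun n => (S n : Set E)) u).toTopologicalSpace = T :=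
    le_antisymm (step2 T hTag hcontT) step3
  refine ⟨by rw [hEq]; exact hTag, by rw [hEq]; exact hTsmul, by rw [hEq]; exact hTlcs,
    fun n => by rw [hEq]; exact hcontT n, fun t' h1 h2 h3 h4 => step2 t' h1 h4⟩
end
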